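/- Suppose w_j > 0 for all j ∈ {1,…,p}. Let β_weight be any weighted Lasso solution, S_weight := {j : (β_weight)_j ≠ 0}, let S₀ ⊆ {1,…,p} be an index set with s₀ := |S₀| ≥ 1, and suppose |S_weight∖S₀| > s₀. Let Λ_s ≥ 0 satisfy ‖Xγ‖_n ≤ Λ_s‖γ‖_2 for every γ ∈ ℝ^p supported on an index set of cardinality at most s₀. Then |S_weight∖S₀| ≤ 8Λ_s² · (‖Xβ_weight − f⁰‖_n²/(λ_weight²·s₀)) · (Σ_{j∈S_weight∖S₀} w_j^{−2})/λ_init². -/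

import Mathlib

open Finset


lemma aux_coeff_zero (a b δ : ℝ) (hb : 0 ≤ b) (hδ : 0 < δ)
    (h : ∀ t : ℝ, |t| < δ → 0 ≤ a * t + b * t ^ 2) : a = 0 := by
  by_contra ha
  have ha2 : 0 < |a| := abs_pos.2 ha
  set ε : ℝ := min (δ / (2 * |a|)) (1 / (b + 1)) with hε
  have hε0 : 0 < ε := lt_min (by positivity) (by positivity)
  have hε1 : ε ≤ 1 / (b + 1) := min_le_right _ _
  have hεδ : ε ≤ δ / (2 * |a|) := min_le_left _ _
  have ht : |(-a * ε)| < δ := by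
    rw [abs_mul, abs_neg, abs_of_pos hε0]
    have h1 : |a| * ε ≤ |a| * (δ / (2 * |a|)) := by nlinarith
    have h2 : |a| * (δ / (2 * |a|)) = δ / 2 := by field_simp
    nlinarith
  have hkey := h (-a * ε) ht
  have hbε : b * ε < 1 := by
    have hb1 : 0 < b + 1 := by linarith
    have : b * (1 / (b + 1)) < 1 := by rw [mul_one_div, div_lt_one hb1]; linarith
    nlinarith
  have hP : 0 < a ^ 2 * ε := by positivity
  nlinarith [mul_pos hP (show (0:ℝ) < 1 - b * ε by linarith)]

lemma aux_exists_smallest {α : Type*} [DecidableEq α] (S : Finset α) (f : α → ℝ) :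
    ∀ k, k ≤ S.card → ∃ T ⊆ S, T.card = k ∧ ∀ j ∈ T, ∀ j' ∈ S \ T, f j ≤ f j' := by
  intro k
  induction k with
  | zero => intro _; exact ⟨∅, empty_subset _, rfl, by simp⟩
  | succ k ih =>
    intro hk
    obtain ⟨T, hTS, hTc, hTm⟩ := ih (le_of_lt (Nat.lt_of_succ_le hk))
    have hne : (S \ T).Nonempty := by
      rw [← Finset.card_pos, Finset.card_sdiff_of_subset hTS, hTc]
      omega
    obtain ⟨a, haST, hamin⟩ := Finset.exists_min_image (S \ T) f hne
    have haS : a ∈ S := (Finset.mem_sdiff.1 haST).1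
    have haT : a ∉ T := (Finset.mem_sdiff.1 haST).2
    refine ⟨insert a T, Finset.insert_subset haS hTS, by rw [Finset.card_insert_of_notMem haT, hTc], ?_⟩
    intro j hj j' hj'
    have hj'2 : j' ∈ S \ T := by
      rw [Finset.mem_sdiff] at hj' ⊢
      exact ⟨hj'.1, fun h => hj'.2 (Finset.mem_insert_of_mem h)⟩
    rcases Finset.mem_insert.1 hj with rfl | hjT
    · exact hamin j' hj'2
    · exact hTm j hjT j' hj'2

lemma aux_smallest_sum {α : Type*} [DecidableEq α] (S T : Finset α) (f : α → ℝ)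
    (hT : T ⊆ S) (h : ∀ j ∈ T, ∀ j' ∈ S \ T, f j ≤ f j') :
    (S.card : ℝ) * ∑ j ∈ T, f j ≤ (T.card : ℝ) * ∑ j ∈ S, f j := by
  have hsplit : ∑ j ∈ S \ T, f j + ∑ j ∈ T, f j = ∑ j ∈ S, f j := Finset.sum_sdiff hT
  have hcard : (S \ T).card = S.card - T.card := Finset.card_sdiff_of_subset hT
  have hcle : T.card ≤ S.card := Finset.card_le_card hT
  have key : ((S \ T).card : ℝ) * ∑ j ∈ T, f j ≤ (T.card : ℝ) * ∑ j ∈ S \ T, f j := by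
    have h1 : ∑ j ∈ T, ∑ _j' ∈ S \ T, f j ≤ ∑ j ∈ T, ∑ j' ∈ S \ T, f j' := by
      refine Finset.sum_le_sum fun j hj => Finset.sum_le_sum fun j' hj' => h j hj j' hj'
    have e1 : ∑ j ∈ T, ∑ _j' ∈ S \ T, f j = ((S \ T).card : ℝ) * ∑ j ∈ T, f j := by
      simp [Finset.sum_const, nsmul_eq_mul, Finset.mul_sum]
    have e2 : ∑ _j ∈ T, ∑ j' ∈ S \ T, f j' = (T.card : ℝ) * ∑ j ∈ S \ T, f j := by
      simp [Finset.sum_const, nsmul_eq_mul]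
    rw [e1, e2] at h1
    exact h1
  have hcast : ((S \ T).card : ℝ) = (S.card : ℝ) - (T.card : ℝ) := by
    rw [hcard, Nat.cast_sub hcle]
  rw [hcast] at key
  nlinarith [key, hsplit]

lemma aux_kkt (n p : ℕ) (hn : 0 < n) (X : Matrix (Fin n) (Fin p) ℝ) (f0 : Fin n → ℝ)
    (w : Fin p → ℝ) (lam0 : ℝ) (βw : Fin p → ℝ)
    (hβw : ∀ β : Fin p → ℝ,
      (∑ i, (X.mulVec βw i - f0 i) ^ 2) / n + lam0 * ∑ j, w j * |βw j|
        ≤ (∑ i, (X.mulVec β i - f0 i) ^ 2) / n + lam0 * ∑ j, w j * |β j|)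
    (j : Fin p) (hj : βw j ≠ 0) :
    (∑ i, X i j * (X.mulVec βw i - f0 i)) ^ 2 = ((n : ℝ) * lam0 * w j) ^ 2 / 4 := by
  classical
  have hnr0 : (0 : ℝ) < (n : ℝ) := by exact_mod_cast hn
  have hne : (n : ℝ) ≠ 0 := ne_of_gt hnr0
  set c : ℝ := ∑ i, X i j * (X.mulVec βw i - f0 i) with hc
  set B : ℝ := ∑ i, (X i j) ^ 2 with hB
  set s : ℝ := if 0 < βw j then 1 else -1 with hsdef
  have hs2 : s ^ 2 = 1 := by rw [hsdef]; split <;> norm_num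
  have habs : ∀ t : ℝ, |t| < |βw j| → |βw j + t| = |βw j| + s * t := by
    intro t ht
    rcases lt_or_gt_of_ne hj with hneg | hpos
    · have hsv : s = -1 := if_neg (not_lt.2 (le_of_lt hneg))
      have h2 := (abs_lt.1 ht).2
      rw [abs_of_neg hneg] at h2
      have h1 : βw j + t < 0 := by linarith
      rw [abs_of_neg h1, abs_of_neg hneg, hsv]; ring
    · have hsv : s = 1 := if_pos hpos
      have h2 := (abs_lt.1 ht).1
      rw [abs_of_pos hpos] at h2
      have h1 : 0 < βw j + t := by linarith
      rw [abs_of_pos h1, abs_of_pos hpos, hsv]; ring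
  have key : ∀ t : ℝ, |t| < |βw j| →
      0 ≤ (2 * c / n + lam0 * w j * s) * t + (B / n) * t ^ 2 := by
    intro t ht
    set β : Fin p → ℝ := Function.update βw j (βw j + t) with hβ
    have hmv : ∀ i, X.mulVec β i = X.mulVec βw i + t * X i j := by
      intro i
      have h1 : ∀ k ∈ Finset.univ, X i k * β k
          = X i k * βw k + (if k = j then t * X i j else 0) := by
        intro k _
        by_cases hk : k = j
        · subst hk; simp only [hβ, Function.update_self, if_pos rfl]; simp; ring
        · simp [hβ, Function.update_of_ne hk, hk]
      simp only [Matrix.mulVec, dotProduct]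
      rw [Finset.sum_congr rfl h1, Finset.sum_add_distrib, Finset.sum_ite_eq' Finset.univ j]
      simp
    have hquad : ∑ i, (X.mulVec β i - f0 i) ^ 2
        = (∑ i, (X.mulVec βw i - f0 i) ^ 2) + 2 * t * c + t ^ 2 * B := by
      have h2 : ∀ i ∈ Finset.univ, (X.mulVec β i - f0 i) ^ 2
          = (X.mulVec βw i - f0 i) ^ 2 + 2 * t * (X i j * (X.mulVec βw i - f0 i))
            + t ^ 2 * (X i j) ^ 2 := by
        intro i _
        rw [hmv i]; ring
      rw [Finset.sum_congr rfl h2, Finset.sum_add_distrib, Finset.sum_add_distrib,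
        ← Finset.mul_sum, ← Finset.mul_sum, hc, hB]
    have hpen : ∑ k, w k * |β k| = (∑ k, w k * |βw k|) + w j * (s * t) := by
      have h1 : ∀ k ∈ Finset.univ, w k * |β k|
          = w k * |βw k| + (if k = j then w j * (s * t) else 0) := by
        intro k _
        by_cases hk : k = j
        · subst hk
          simp only [hβ, Function.update_self, if_pos rfl]
          rw [habs t ht]; simp; ring
        · simp [hβ, Function.update_of_ne hk, hk]
      rw [Finset.sum_congr rfl h1, Finset.sum_add_distrib, Finset.sum_ite_eq' Finset.univ j]
      simp
    have h0 := hβw β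
    rw [hquad, hpen] at h0
    have hiden : (2 * c / n + lam0 * w j * s) * t + (B / n) * t ^ 2
        = (((∑ i, (X.mulVec βw i - f0 i) ^ 2) + 2 * t * c + t ^ 2 * B) / n
            + lam0 * ((∑ k, w k * |βw k|) + w j * (s * t)))
          - ((∑ i, (X.mulVec βw i - f0 i) ^ 2) / n + lam0 * ∑ k, w k * |βw k|) := by
      field_simp
      ring
    rw [hiden]
    linarith
  have hB0 : 0 ≤ B / n := by
    have : 0 ≤ B := Finset.sum_nonneg fun i _ => sq_nonneg _
    positivity
  have ha := aux_coeff_zero _ _ _ hB0 (abs_pos.2 hj) key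
  have h2 : 2 * c / n = -(lam0 * w j * s) := by linarith
  rw [div_eq_iff hne] at h2
  calc c ^ 2 = (2 * c) ^ 2 / 4 := by ring
    _ = ((n : ℝ) * lam0 * w j) ^ 2 * s ^ 2 / 4 := by rw [h2]; ring
    _ = ((n : ℝ) * lam0 * w j) ^ 2 / 4 := by rw [hs2, mul_one]

/-- Second part of Lemma `weightselect`: sharper bound on the number of false positives
of the noiseless weighted Lasso when there are more than `s₀` of them. -/
theorem weighted_lasso_false_positives_sparse
    (n p : ℕ) (hn : 0 < n)
    (X : Matrix (Fin n) (Fin p) ℝ) (f0 : Fin n → ℝ)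
    (w : Fin p → ℝ) (hw : ∀ j, 0 < w j)
    (lamInit lamWeight : ℝ) (hlamInit : 0 < lamInit) (hlamWeight : 0 < lamWeight)
    (βw : Fin p → ℝ)
    (hβw : ∀ β : Fin p → ℝ,
      (∑ i, (X.mulVec βw i - f0 i) ^ 2) / n + lamInit * lamWeight * ∑ j, w j * |βw j|
        ≤ (∑ i, (X.mulVec β i - f0 i) ^ 2) / n + lamInit * lamWeight * ∑ j, w j * |β j|)
    (Sw : Finset (Fin p)) (hSw : ∀ j, j ∈ Sw ↔ βw j ≠ 0)
    (S0 : Finset (Fin p)) (hS0 : 1 ≤ S0.card)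
    (hmany : S0.card < (Sw \ S0).card)
    (Λs : ℝ) (hΛs0 : 0 ≤ Λs)
    (hΛs : ∀ T : Finset (Fin p), T.card ≤ S0.card →
      ∀ γ : Fin p → ℝ, (∀ j ∉ T, γ j = 0) →
      Real.sqrt ((∑ i, (X.mulVec γ i) ^ 2) / n) ≤ Λs * Real.sqrt (∑ j, (γ j) ^ 2)) :
    ((Sw \ S0).card : ℝ)
      ≤ 8 * Λs ^ 2 * (((∑ i, (X.mulVec βw i - f0 i) ^ 2) / n) / (lamWeight ^ 2 * S0.card))
          * (∑ j ∈ Sw \ S0, ((w j)⁻¹) ^ 2) / lamInit ^ 2 := by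
  classical
  have hnr0 : (0 : ℝ) < (n : ℝ) := by exact_mod_cast hn
  have hne : (n : ℝ) ≠ 0 := ne_of_gt hnr0
  set lam0 : ℝ := lamInit * lamWeight with hlam0def
  have hlam0 : 0 < lam0 := mul_pos hlamInit hlamWeight
  set Q : ℝ := ∑ i, (X.mulVec βw i - f0 i) ^ 2 with hQdef
  have hQ0 : 0 ≤ Q := Finset.sum_nonneg fun i _ => sq_nonneg _
  set Qn : ℝ := Q / n with hQndef
  have hQn0 : 0 ≤ Qn := by positivity
  have hQeq : Q = Qn * n := (div_mul_cancel₀ Q hne).symm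
  set c : Fin p → ℝ := fun j => ∑ i, X i j * (X.mulVec βw i - f0 i) with hcdef
  set mr : ℝ := ((Sw \ S0).card : ℝ) with hmrdef
  set s0r : ℝ := (S0.card : ℝ) with hs0rdef
  have hs0r1 : 1 ≤ s0r := by rw [hs0rdef]; exact_mod_cast hS0
  have hmrs : s0r < mr := by rw [hs0rdef, hmrdef]; exact_mod_cast hmany
  -- KKT conditions
  have hKKT : ∀ j ∈ Sw, (c j) ^ 2 = ((n : ℝ) * lam0 * w j) ^ 2 / 4 := by
    intro j hj
    exact aux_kkt n p hn X f0 w lam0 βw hβw j ((hSw j).1 hj)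
  -- choose the s₀ indices with smallest w⁻²
  obtain ⟨T, hTsub, hTcard, hTmin⟩ :=
    aux_exists_smallest (Sw \ S0) (fun j => ((w j)⁻¹) ^ 2) S0.card (le_of_lt hmany)
  have hTSw : T ⊆ Sw := hTsub.trans (Finset.sdiff_subset)
  set W : ℝ := ∑ j ∈ T, ((w j)⁻¹) ^ 2 with hWdef
  set WS : ℝ := ∑ j ∈ Sw \ S0, ((w j)⁻¹) ^ 2 with hWSdef
  have hW0 : 0 ≤ W := Finset.sum_nonneg fun j _ => sq_nonneg _
  have hWS0 : 0 ≤ WS := Finset.sum_nonneg fun j _ => sq_nonneg _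
  -- the test vector γ
  set γ : Fin p → ℝ := fun j => if j ∈ T then c j / (n * (w j) ^ 2) else 0 with hγdef
  have hγ0 : ∀ j ∉ T, γ j = 0 := by intro j hj; rw [hγdef]; exact if_neg hj
  -- inner product identity
  have hsum1 : ∑ i, (X.mulVec γ i) * (X.mulVec βw i - f0 i) = ∑ j ∈ T, γ j * c j := by
    calc ∑ i, (X.mulVec γ i) * (X.mulVec βw i - f0 i)
        = ∑ i, ∑ j, (X i j * γ j) * (X.mulVec βw i - f0 i) := by
          refine Finset.sum_congr rfl fun i _ => ?_
          simp only [Matrix.mulVec, dotProduct]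
          rw [Finset.sum_mul]
      _ = ∑ j, ∑ i, (X i j * γ j) * (X.mulVec βw i - f0 i) := Finset.sum_comm
      _ = ∑ j, γ j * c j := by
          refine Finset.sum_congr rfl fun j _ => ?_
          rw [hcdef, Finset.mul_sum]
          exact Finset.sum_congr rfl fun i _ => by ring
      _ = ∑ j ∈ T, γ j * c j := by
          refine (Finset.sum_subset (Finset.subset_univ T) fun j _ hj => ?_).symm
          rw [hγ0 j hj, zero_mul]
  -- value of the inner product
  have hγc : ∀ j ∈ T, γ j * c j = (n : ℝ) * lam0 ^ 2 / 4 := by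
    intro j hj
    have hwj : w j ≠ 0 := ne_of_gt (hw j)
    have h1 : γ j * c j = (c j) ^ 2 / ((n : ℝ) * (w j) ^ 2) := by
      rw [hγdef]; simp only [if_pos hj]; ring
    rw [h1, hKKT j (hTSw hj)]
    field_simp
  have hsum2 : ∑ j ∈ T, γ j * c j = s0r * ((n : ℝ) * lam0 ^ 2 / 4) := by
    rw [Finset.sum_congr rfl hγc, Finset.sum_const, hTcard, nsmul_eq_mul, hs0rdef]
  -- squared norm of γ
  have hγsq : ∑ j, (γ j) ^ 2 = lam0 ^ 2 / 4 * W := by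
    have h1 : ∑ j, (γ j) ^ 2 = ∑ j ∈ T, (γ j) ^ 2 := by
      refine (Finset.sum_subset (Finset.subset_univ T) fun j _ hj => ?_).symm
      rw [hγ0 j hj]; ring
    have h2 : ∀ j ∈ T, (γ j) ^ 2 = lam0 ^ 2 / 4 * ((w j)⁻¹) ^ 2 := by
      intro j hj
      have hwj : w j ≠ 0 := ne_of_gt (hw j)
      rw [hγdef]; simp only [if_pos hj]
      rw [div_pow, hKKT j (hTSw hj)]
      field_simp
    rw [h1, Finset.sum_congr rfl h2, ← Finset.mul_sum, hWdef]
  -- sparse eigenvalue bound, squared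
  have hA2 : ∑ i, (X.mulVec γ i) ^ 2 ≤ Λs ^ 2 * (lam0 ^ 2 / 4 * W) * n := by
    have h1 := hΛs T (by rw [hTcard]) γ hγ0
    have hAnn : 0 ≤ (∑ i, (X.mulVec γ i) ^ 2) / (n : ℝ) := by positivity
    have h2 : Real.sqrt ((∑ i, (X.mulVec γ i) ^ 2) / (n : ℝ)) ^ 2
        ≤ (Λs * Real.sqrt (∑ j, (γ j) ^ 2)) ^ 2 :=
      pow_le_pow_left₀ (Real.sqrt_nonneg _) h1 2
    rw [Real.sq_sqrt hAnn, mul_pow, Real.sq_sqrt (Finset.sum_nonneg fun j _ => sq_nonneg _)] at h2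
    rw [div_le_iff₀ hnr0] at h2
    calc ∑ i, (X.mulVec γ i) ^ 2 ≤ Λs ^ 2 * (∑ j, (γ j) ^ 2) * n := h2
      _ = Λs ^ 2 * (lam0 ^ 2 / 4 * W) * n := by rw [hγsq]
  -- Cauchy-Schwarz
  have hCS := Finset.sum_mul_sq_le_sq_mul_sq Finset.univ
    (fun i => X.mulVec γ i) (fun i => X.mulVec βw i - f0 i)
  rw [hsum1, hsum2] at hCS
  have hE : (s0r * ((n : ℝ) * lam0 ^ 2 / 4)) ^ 2
      ≤ (Λs ^ 2 * (lam0 ^ 2 / 4 * W) * n) * Q := by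
    calc (s0r * ((n : ℝ) * lam0 ^ 2 / 4)) ^ 2
        ≤ (∑ i, (X.mulVec γ i) ^ 2) * Q := hCS
      _ ≤ (Λs ^ 2 * (lam0 ^ 2 / 4 * W) * n) * Q := by
          exact mul_le_mul_of_nonneg_right hA2 hQ0
  rw [hQeq] at hE
  -- main sparse-eigenvalue consequence
  have hI1 : s0r ^ 2 * lam0 ^ 2 ≤ 4 * Λs ^ 2 * Qn * W := by
    have hpos : (0 : ℝ) < (n : ℝ) ^ 2 * lam0 ^ 2 / 16 := by positivity
    rw [← mul_le_mul_iff_of_pos_right hpos]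
    linear_combination hE
  -- averaging over the smallest weights
  have hI2 : mr * W ≤ s0r * WS := by
    have h1 := aux_smallest_sum (Sw \ S0) T (fun j => ((w j)⁻¹) ^ 2) hTsub hTmin
    rw [hTcard] at h1
    exact h1
  -- combine
  have hP4 : (0 : ℝ) ≤ 4 * Λs ^ 2 * Qn := by positivity
  have hmr0 : (0 : ℝ) ≤ mr := by linarith
  have step1 : s0r ^ 2 * lam0 ^ 2 * mr ≤ 4 * Λs ^ 2 * Qn * W * mr :=
    mul_le_mul_of_nonneg_right hI1 hmr0
  have step2 : 4 * Λs ^ 2 * Qn * W * mr ≤ 4 * Λs ^ 2 * Qn * (s0r * WS) := by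
    have h2 := mul_le_mul_of_nonneg_left hI2 hP4
    calc 4 * Λs ^ 2 * Qn * W * mr = 4 * Λs ^ 2 * Qn * (mr * W) := by ring
      _ ≤ 4 * Λs ^ 2 * Qn * (s0r * WS) := h2
  have hs0pos : (0 : ℝ) < s0r := by linarith
  have step4 : lam0 ^ 2 * mr * s0r ≤ 4 * Λs ^ 2 * Qn * WS := by
    have h3 : s0r * (lam0 ^ 2 * mr * s0r) ≤ s0r * (4 * Λs ^ 2 * Qn * WS) := by
      calc s0r * (lam0 ^ 2 * mr * s0r) = s0r ^ 2 * lam0 ^ 2 * mr := by ring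
        _ ≤ 4 * Λs ^ 2 * Qn * W * mr := step1
        _ ≤ 4 * Λs ^ 2 * Qn * (s0r * WS) := step2
        _ = s0r * (4 * Λs ^ 2 * Qn * WS) := by ring
    exact le_of_mul_le_mul_left h3 hs0pos
  have hfinal : mr * (lam0 ^ 2 * s0r) ≤ 8 * Λs ^ 2 * Qn * WS := by
    have h4 : (0 : ℝ) ≤ 4 * (Λs ^ 2 * (Qn * WS)) := by positivity
    calc mr * (lam0 ^ 2 * s0r) = lam0 ^ 2 * mr * s0r := by ring
      _ ≤ 4 * Λs ^ 2 * Qn * WS := step4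
      _ ≤ 8 * Λs ^ 2 * Qn * WS := by linarith [h4]
  have hlt : (0 : ℝ) < lamWeight ^ 2 * s0r := mul_pos (pow_pos hlamWeight 2) hs0pos
  rw [le_div_iff₀ (pow_pos hlamInit 2)]
  rw [show 8 * Λs ^ 2 * (Qn / (lamWeight ^ 2 * s0r)) * WS
      = (8 * Λs ^ 2 * Qn * WS) / (lamWeight ^ 2 * s0r) by ring]
  rw [le_div_iff₀ hlt]
  calc mr * lamInit ^ 2 * (lamWeight ^ 2 * s0r) = mr * (lam0 ^ 2 * s0r) := by
        rw [hlam0def]; ring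
    _ ≤ 8 * Λs ^ 2 * Qn * WS := hfinal
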